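/- Define the operators L₁ = z(1−z)∂_z² + (1−β−(2+α)z)∂_z and L₂ = (1−z)∂_z − (α+1)I acting on smooth functions. Then for every nonnegative integer n, L₁ P_n(z; α, β) = −n(n+α+1) P_n(z; α+1, β−1) and L₂ P_n(z; α, β) = −(n+α+1) P_n(z; α+1, β−1). In particular L₁ P_n = n L₂ P_n. -/

import Mathlib

open Finset

noncomputable def poch (a : ℝ) (k : ℕ) : ℝ := ∏ i ∈ Finset.range k, (a + i)

noncomputable def HR (n : ℕ) (α β : ℝ) (z : ℝ) : ℝ :=
  (poch β n / poch (α + 1) n) *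
    ∑ k ∈ Finset.range (n + 1),
      (poch (-(n : ℝ)) k * poch (α + 1) k) / ((k.factorial : ℝ) * poch (1 - β - (n : ℝ)) k) * z ^ k

noncomputable def coefA (n : ℕ) (α β : ℝ) (k : ℕ) : ℝ :=
  (poch β n / poch (α + 1) n) *
    ((poch (-(n : ℝ)) k * poch (α + 1) k) / ((k.factorial : ℝ) * poch (1 - β - (n : ℝ)) k))

lemma poch_succ (a : ℝ) (k : ℕ) : poch a (k+1) = poch a k * (a + k) := by
  simp [poch, Finset.prod_range_succ]

lemma poch_star (a : ℝ) (k : ℕ) : a * poch (a+1) k = poch a k * (a + k) := by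
  rw [← poch_succ]
  unfold poch
  rw [Finset.prod_range_succ']
  simp only [Nat.cast_zero, add_zero]
  rw [mul_comm]
  congr 1
  apply Finset.prod_congr rfl
  intro i _
  push_cast
  ring

lemma poch_ne_zero {a : ℝ} {k : ℕ} (h : ∀ j < k, a + (j : ℝ) ≠ 0) : poch a k ≠ 0 := by
  rw [poch]
  exact Finset.prod_ne_zero_iff.mpr (fun i hi => h i (Finset.mem_range.mp hi))

lemma poch_neg_nat_eq_zero (n k : ℕ) (h : n < k) : poch (-(n:ℝ)) k = 0 := by
  rw [poch]
  apply Finset.prod_eq_zero (Finset.mem_range.mpr h)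
  simp

lemma coefA_eq_zero (n : ℕ) (α β : ℝ) (k : ℕ) (h : n < k) : coefA n α β k = 0 := by
  simp [coefA, poch_neg_nat_eq_zero n k h]

lemma HR_eq (n : ℕ) (α β z : ℝ) :
    HR n α β z = ∑ k ∈ Finset.range (n+1), coefA n α β k * z ^ k := by
  rw [HR, Finset.mul_sum]
  exact Finset.sum_congr rfl fun k _ => by rw [coefA]; ring

lemma deriv_sum_pow (m : ℕ) (c : ℕ → ℝ) (z : ℝ) :
    deriv (fun t => ∑ k ∈ Finset.range m, c k * t ^ k) z
      = ∑ k ∈ Finset.range m, (c k * k) * z ^ (k-1) := by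
  rw [deriv_fun_sum (fun i _ => ((differentiableAt_pow i).const_mul _))]
  refine Finset.sum_congr rfl fun k _ => ?_
  rw [deriv_const_mul _ (differentiableAt_pow _), deriv_pow_field]
  ring

lemma deriv_sum_pow' (m : ℕ) (c : ℕ → ℝ) (z : ℝ) :
    deriv (fun t => ∑ k ∈ Finset.range m, c k * t ^ (k-1)) z
      = ∑ k ∈ Finset.range m, (c k * ((k-1 : ℕ) : ℝ)) * z ^ (k-1-1) := by
  rw [deriv_fun_sum (fun i _ => ((differentiableAt_pow (i-1)).const_mul _))]
  refine Finset.sum_congr rfl fun k _ => ?_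
  rw [deriv_const_mul _ (differentiableAt_pow _), deriv_pow_field]
  ring

lemma shift_sum (n : ℕ) (g : ℕ → ℝ) (h0 : g 0 = 0) (htop : g (n+1) = 0) (z : ℝ) :
    ∑ k ∈ Finset.range (n+1), g k * z^(k-1) = ∑ k ∈ Finset.range (n+1), g (k+1) * z^k := by
  rw [Finset.sum_range_succ' (fun k => g k * z^(k-1)) n, Finset.sum_range_succ]
  simp [h0, htop]

lemma zmul (z C : ℝ) (m : ℕ) (hC : m = 0 → C = 0) : z * (C * z^(m-1)) = C * z^m := by
  cases m with
  | zero => simp [hC rfl]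
  | succ j => rw [Nat.add_sub_cancel, pow_succ]; ring

lemma keys (n : ℕ) (α β : ℝ) (k : ℕ) (hk : k ≤ n) (hn : 1 ≤ n)
    (hβ : ∀ j < n, β + (j : ℝ) ≠ 0)
    (hα : ∀ j < n + 1, α + 1 + (j : ℝ) ≠ 0)
    (hd : ∀ j < n, 1 - β - (n : ℝ) + (j : ℝ) ≠ 0)
    (hd' : ∀ j < n, 1 - (β - 1) - (n : ℝ) + (j : ℝ) ≠ 0) :
    (((k:ℝ)+1) * coefA n α β (k+1) - ((k:ℝ) + α + 1) * coefA n α β k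
      = -((n:ℝ)+α+1) * coefA n (α+1) (β-1) k) ∧
    (((k:ℝ)+1)*(((k:ℝ)+1)-β) * coefA n α β (k+1) - (k:ℝ)*((k:ℝ)+α+1) * coefA n α β k
      = -((n:ℝ)*((n:ℝ)+α+1)) * coefA n (α+1) (β-1) k) := by
  have hn1 : ((n:ℝ)) ≥ 1 := by exact_mod_cast hn
  have hAn : poch (α+1) n ≠ 0 := poch_ne_zero (fun j hj => hα j (by omega))
  have hDk : poch (1-β-(n:ℝ)) k ≠ 0 := poch_ne_zero (fun j hj => hd j (by omega))
  have hF : ((k.factorial : ℝ)) ≠ 0 := by exact_mod_cast k.factorial_ne_zero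
  have hα1 : α+1 ≠ 0 := by have := hα 0 (by omega); simpa using this
  have hα1n : α+1+(n:ℝ) ≠ 0 := hα n (by omega)
  have h1βn : 1-β-(n:ℝ) ≠ 0 := by have := hd 0 (by omega); simpa using this
  have hcast : ((n-1 : ℕ) : ℝ) = (n:ℝ) - 1 := by
    rw [Nat.cast_sub hn]; norm_num
  have hβn : β-1+(n:ℝ) ≠ 0 := by
    have := hβ (n-1) (by omega); rw [hcast] at this; intro h; apply this; linarith
  have hs : 1-β-(n:ℝ)+(k:ℝ) ≠ 0 := by
    rcases lt_or_eq_of_le hk with h | h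
    · exact hd k h
    · rw [h]
      have := hd' (n-1) (by omega); rw [hcast] at this
      intro h2; apply this; linarith
  have hX2 : poch (α+1+1) k = poch (α+1) k * (α+1+(k:ℝ)) / (α+1) := by
    rw [eq_div_iff hα1]; linear_combination poch_star (α+1) k
  have harg : (1:ℝ)-(β-1)-(n:ℝ) = (1-β-(n:ℝ))+1 := by ring
  have hD2 : poch ((1:ℝ)-(β-1)-(n:ℝ)) k
      = poch (1-β-(n:ℝ)) k * (1-β-(n:ℝ)+(k:ℝ)) / (1-β-(n:ℝ)) := by
    rw [harg, eq_div_iff h1βn]; linear_combination poch_star (1-β-(n:ℝ)) k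
  have hBn : poch (β-1) n = (β-1) * poch β n / (β-1+(n:ℝ)) := by
    have hb : poch β n = poch ((β-1)+1) n :=
      congrArg (fun x => poch x n) (by ring : β = (β-1)+1)
    rw [eq_div_iff hβn, hb]
    linear_combination -poch_star (β-1) n
  have hA2n : poch (α+1+1) n = poch (α+1) n * (α+1+(n:ℝ)) / (α+1) := by
    rw [eq_div_iff hα1]; linear_combination poch_star (α+1) n
  have eF : (((k+1).factorial : ℝ)) = ((k:ℝ)+1) * (k.factorial : ℝ) := by
    push_cast [Nat.factorial_succ]; ring
  constructor <;>
  · unfold coefA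
    rw [poch_succ (-(n:ℝ)) k, poch_succ (α+1) k, poch_succ (1-β-(n:ℝ)) k, eF, hX2, hD2, hBn, hA2n]
    field_simp
    ring

theorem hr_gevp (n : ℕ) (α β : ℝ)
    (hβ : ∀ j < n, β + (j : ℝ) ≠ 0)
    (hα : ∀ j < n + 1, α + 1 + (j : ℝ) ≠ 0)
    (hd : ∀ j < n, 1 - β - (n : ℝ) + (j : ℝ) ≠ 0)
    (hd' : ∀ j < n, 1 - (β - 1) - (n : ℝ) + (j : ℝ) ≠ 0) :
    (∀ z : ℝ,
      z * (1 - z) * deriv (deriv (fun t => HR n α β t)) z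
        + (1 - β - (2 + α) * z) * deriv (fun t => HR n α β t) z
      = -((n : ℝ) * ((n : ℝ) + α + 1)) * HR n (α + 1) (β - 1) z) ∧
    (∀ z : ℝ,
      (1 - z) * deriv (fun t => HR n α β t) z - (α + 1) * HR n α β z
      = -((n : ℝ) + α + 1) * HR n (α + 1) (β - 1) z) ∧
    (∀ z : ℝ,
      z * (1 - z) * deriv (deriv (fun t => HR n α β t)) z
        + (1 - β - (2 + α) * z) * deriv (fun t => HR n α β t) z
      = (n : ℝ) * ((1 - z) * deriv (fun t => HR n α β t) z - (α + 1) * HR n α β z)) := by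
  rcases Nat.eq_zero_or_pos n with hn0 | hn
  · subst hn0
    have hc' : ∀ (γ δ t : ℝ), HR 0 γ δ t = 1 := by
      intro γ δ t; simp [HR, poch]
    have h1 : (fun t : ℝ => HR 0 α β t) = fun _ => (1:ℝ) := funext fun t => hc' α β t
    refine ⟨fun z => ?_, fun z => ?_, fun z => ?_⟩ <;>
      simp [h1, hc' (α+1) (β-1), deriv_const']
  · -- n ≥ 1
    have hAtop : ∀ j, n < j → coefA n α β j = 0 := fun j hj => coefA_eq_zero n α β j hj
    have hd1 : (fun t : ℝ => HR n α β t) = fun t => ∑ k ∈ Finset.range (n+1), coefA n α β k * t ^ k := by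
      funext t; exact HR_eq n α β t
    have hD1 : deriv (fun t : ℝ => HR n α β t)
        = fun z => ∑ k ∈ Finset.range (n+1), (coefA n α β k * (k:ℝ)) * z ^ (k-1) := by
      funext z; rw [hd1, deriv_sum_pow]
    have hD2 : deriv (deriv (fun t : ℝ => HR n α β t))
        = fun z => ∑ k ∈ Finset.range (n+1), ((coefA n α β k * (k:ℝ)) * (((k-1:ℕ)):ℝ)) * z ^ (k-1-1) := by
      rw [hD1]
      funext z
      rw [deriv_sum_pow' (n+1) (fun k => coefA n α β k * (k:ℝ)) z]
    have key := fun (k : ℕ) (hk : k ≤ n) => keys n α β k hk hn hβ hα hd hd'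
    have hz1a : ∀ z : ℝ, z * (∑ k ∈ Finset.range (n+1), (coefA n α β k * (k:ℝ)) * z ^ (k-1))
        = ∑ k ∈ Finset.range (n+1), (coefA n α β k * (k:ℝ)) * z ^ k := by
      intro z
      rw [Finset.mul_sum]
      refine Finset.sum_congr rfl fun k _ => zmul z _ k ?_
      intro h; subst h; simp
    have hz1b : ∀ z : ℝ, (∑ k ∈ Finset.range (n+1), (coefA n α β k * (k:ℝ)) * z ^ (k-1))
        = ∑ k ∈ Finset.range (n+1), (coefA n α β (k+1) * ((k:ℝ)+1)) * z ^ k := by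
      intro z
      rw [shift_sum n (fun k => coefA n α β k * (k:ℝ)) (by simp) (by simp [hAtop (n+1) (by omega)]) z]
      exact Finset.sum_congr rfl fun k _ => by push_cast; ring
    have hz2a : ∀ z : ℝ, z * (∑ k ∈ Finset.range (n+1), ((coefA n α β k * (k:ℝ)) * (((k-1:ℕ)):ℝ)) * z ^ (k-1-1))
        = ∑ k ∈ Finset.range (n+1), ((coefA n α β k * (k:ℝ)) * (((k-1:ℕ)):ℝ)) * z ^ (k-1) := by
      intro z
      rw [Finset.mul_sum]
      refine Finset.sum_congr rfl fun k _ => zmul z _ (k-1) ?_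
      intro h
      match k, h with
      | 0, _ => simp
      | 1, _ => simp
    have hz2c : ∀ z : ℝ, z * (∑ k ∈ Finset.range (n+1), ((coefA n α β k * (k:ℝ)) * (((k-1:ℕ)):ℝ)) * z ^ (k-1))
        = ∑ k ∈ Finset.range (n+1), ((coefA n α β k * (k:ℝ)) * (((k-1:ℕ)):ℝ)) * z ^ k := by
      intro z
      rw [Finset.mul_sum]
      refine Finset.sum_congr rfl fun k _ => zmul z _ k ?_
      intro h; subst h; simp
    have hz2b : ∀ z : ℝ, (∑ k ∈ Finset.range (n+1), ((coefA n α β k * (k:ℝ)) * (((k-1:ℕ)):ℝ)) * z ^ (k-1))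
        = ∑ k ∈ Finset.range (n+1), ((coefA n α β (k+1) * ((k:ℝ)+1)) * (k:ℝ)) * z ^ k := by
      intro z
      rw [shift_sum n (fun k => (coefA n α β k * (k:ℝ)) * (((k-1:ℕ)):ℝ)) (by simp) (by simp [hAtop (n+1) (by omega)]) z]
      refine Finset.sum_congr rfl fun k _ => ?_
      rw [Nat.add_sub_cancel]
      push_cast
      ring
    have L2 : ∀ z : ℝ,
        (1 - z) * deriv (fun t => HR n α β t) z - (α + 1) * HR n α β z
        = -((n : ℝ) + α + 1) * HR n (α + 1) (β - 1) z := by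
      intro z
      simp only [hD1]
      rw [HR_eq n α β z, HR_eq n (α+1) (β-1) z]
      rw [sub_mul, one_mul, hz1a z, hz1b z]
      rw [Finset.mul_sum, Finset.mul_sum]
      rw [← Finset.sum_sub_distrib, ← Finset.sum_sub_distrib]
      refine Finset.sum_congr rfl fun k hk => ?_
      have hk' : k ≤ n := Nat.lt_succ_iff.mp (Finset.mem_range.mp hk)
      linear_combination z^k * (key k hk').1
    have L1 : ∀ z : ℝ,
        z * (1 - z) * deriv (deriv (fun t => HR n α β t)) z
          + (1 - β - (2 + α) * z) * deriv (fun t => HR n α β t) z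
        = -((n : ℝ) * ((n : ℝ) + α + 1)) * HR n (α + 1) (β - 1) z := by
      intro z
      rw [hD2]
      simp only [hD1]
      rw [HR_eq n (α+1) (β-1) z]
      rw [show ∀ S2 S1 : ℝ, z*(1-z)*S2 + (1-β-(2+α)*z)*S1
            = (z*S2 - z*(z*S2)) + ((1-β)*S1 - (2+α)*(z*S1)) from fun S2 S1 => by ring]
      rw [hz2a z, hz2c z, hz1a z, hz1b z, hz2b z]
      rw [Finset.mul_sum, Finset.mul_sum, Finset.mul_sum]
      rw [← Finset.sum_sub_distrib, ← Finset.sum_sub_distrib, ← Finset.sum_add_distrib]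
      refine Finset.sum_congr rfl fun k hk => ?_
      have hk' : k ≤ n := Nat.lt_succ_iff.mp (Finset.mem_range.mp hk)
      have K := (key k hk').2
      rcases k with _ | j
      · norm_num at K ⊢
        linear_combination K
      · rw [Nat.add_sub_cancel]
        push_cast at K ⊢
        linear_combination z^(j+1) * K
    exact ⟨L1, L2, fun z => by rw [L1 z, L2 z]; ring⟩
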